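/- arXiv:2111.05525 — 5 statements merged into one kernel-verified Lean document; each statement's English description precedes it below -/
import Mathlib

section
/- Let λ be a partition of n and T a tableau of shape λ. If μ is a partition of n that is not less than or equal to λ in the dominance order, then f_T(a) = 0 for every point a ∈ K^n of orbit type μ. -/
open MvPolynomial

/-- `l` is a partition of `n`: non-increasing list of positive integers summing to `n`. -/
def IsPartitionList (n : ℕ) (l : List ℕ) : Prop :=
  l.Pairwise (· ≥ ·) ∧ (∀ x ∈ l, 0 < x) ∧ l.sum = n

/-- Dominance order: `l ⊵ m` iff every partial sum of `m` is at most that of `l`. -/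
def Dominates (l m : List ℕ) : Prop :=
  ∀ k : ℕ, (m.take k).sum ≤ (l.take k).sum

/-- `T` is a (bijective) tableau of shape `l`, sending each entry in `Fin n` to its
cell `(row, column)` (0-indexed) of the Young diagram of `l`. -/
def IsTableau (n : ℕ) (l : List ℕ) (T : Fin n → ℕ × ℕ) : Prop :=
  Function.Injective T ∧
    ∀ p : ℕ × ℕ, p ∈ Set.range T ↔ p.1 < l.length ∧ p.2 < l.getD p.1 0

/-- The Specht polynomial of a tableau: product of `x i - x j` over pairs `i, j`
in the same column with `j` strictly below `i`. -/
noncomputable def spechtPoly (n : ℕ) (K : Type*) [Field K] (T : Fin n → ℕ × ℕ) :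
    MvPolynomial (Fin n) K :=
  ∏ p ∈ Finset.univ.filter
      (fun p : Fin n × Fin n => (T p.1).2 = (T p.2).2 ∧ (T p.1).1 < (T p.2).1),
    (X p.1 - X p.2)

/-- The multiplicity of the value `v` among the coordinates of `a`. -/
noncomputable def mult {K : Type*} {n : ℕ} (a : Fin n → K) (v : K) : ℕ :=
  {i | a i = v}.ncard

/-- `a ∈ K^n` has orbit type `l`: the multiplicities of the distinct coordinate
values of `a`, listed in non-increasing order, form the list `l`. -/
def HasOrbitType {K : Type*} {n : ℕ} (a : Fin n → K) (l : List ℕ) : Prop :=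
  l.Pairwise (· ≥ ·) ∧
    ∃ α : Fin l.length → K, Function.Injective α ∧
      (∀ i, ∃ j, a i = α j) ∧ ∀ j : Fin l.length, mult a (α j) = l.get j

/-- `λ + ⟨k⟩` (1-indexed `k`): add one box to the `k`-th part and re-sort
non-increasingly; append a part `1` if `k` exceeds the length. -/
def addBox (l : List ℕ) (k : ℕ) : List ℕ :=
  if k ≤ l.length then
    ((↑(l.set (k - 1) (l.getD (k - 1) 0 + 1)) : Multiset ℕ).sort (· ≤ ·)).reverse
  else l ++ [1]

/-- `F` is an upper filter of partitions of `n` for the dominance order. -/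
def IsUpperFilter (n : ℕ) (F : Set (List ℕ)) : Prop :=
  (∀ l ∈ F, IsPartitionList n l) ∧
    ∀ l m : List ℕ, IsPartitionList n l → m ∈ F → Dominates l m → l ∈ F

/-- `F` is a lower filter of partitions of `n` for the dominance order. -/
def IsLowerFilter (n : ℕ) (F : Set (List ℕ)) : Prop :=
  (∀ l ∈ F, IsPartitionList n l) ∧
    ∀ l m : List ℕ, IsPartitionList n m → l ∈ F → Dominates l m → m ∈ F

/-- Lexicographic order on exponent vectors with `x 0 < x 1 < ⋯ < x (n-1)`. -/
def lexLt {n : ℕ} (a b : Fin n →₀ ℕ) : Prop :=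
  ∃ i, a i < b i ∧ ∀ j, i < j → a j = b j

/-- `m` is the initial (leading) monomial of `f` w.r.t. the strict order `lt`. -/
def IsInitialMon {K : Type*} [CommRing K] {n : ℕ}
    (lt : (Fin n →₀ ℕ) → (Fin n →₀ ℕ) → Prop)
    (f : MvPolynomial (Fin n) K) (m : Fin n →₀ ℕ) : Prop :=
  m ∈ f.support ∧ ∀ m' ∈ f.support, m' ≠ m → lt m' m

/-- The Specht ideal of shape `l`. -/
noncomputable def spechtIdeal (n : ℕ) (K : Type*) [Field K] (l : List ℕ) :
    Ideal (MvPolynomial (Fin n) K) :=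
  Ideal.span { f | ∃ T : Fin n → ℕ × ℕ, IsTableau n l T ∧ f = spechtPoly n K T }

/-- The Specht ideal of a family `F` of partitions: `Σ_{λ ∈ F} I_λ`. -/
noncomputable def spechtIdealFilter (n : ℕ) (K : Type*) [Field K] (F : Set (List ℕ)) :
    Ideal (MvPolynomial (Fin n) K) :=
  Ideal.span { f | ∃ l ∈ F, ∃ T : Fin n → ℕ × ℕ, IsTableau n l T ∧ f = spechtPoly n K T }

/-- A monomial order on `K[x_1,…,x_n]`, given as a strict linear order on the
exponent vectors compatible with addition and with `0` minimal. -/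
structure MonOrder (n : ℕ) where
  lt : (Fin n →₀ ℕ) → (Fin n →₀ ℕ) → Prop
  trichot : ∀ a b, lt a b ∨ a = b ∨ lt b a
  irrefl : ∀ a, ¬ lt a a
  trans' : ∀ a b c, lt a b → lt b c → lt a c
  zero_lt : ∀ a, a ≠ 0 → lt 0 a
  add_right : ∀ a b c, lt a b → lt (a + c) (b + c)


lemma take_sum_eq (l : List ℕ) (k : ℕ) : (l.take k).sum = ∑ r ∈ Finset.range k, l.getD r 0 := by
  induction k with
  | zero => simp
  | succ k ih =>
    rw [Finset.sum_range_succ, ← ih, List.take_succ, List.sum_append]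
    congr 1
    rcases lt_or_ge k l.length with h | h
    · simp [List.getD_eq_getElem _ _ h, List.getElem?_eq_getElem h]
    · simp [List.getD_eq_default _ _ h, List.getElem?_eq_none h]

lemma getD_anti {l : List ℕ} (hl : l.Pairwise (· ≥ ·)) {r r' : ℕ} (h : r' ≤ r) :
    l.getD r 0 ≤ l.getD r' 0 := by
  rcases lt_or_ge r l.length with hr | hr
  · have hr' : r' < l.length := lt_of_le_of_lt h hr
    rw [List.getD_eq_getElem _ _ hr, List.getD_eq_getElem _ _ hr']
    rcases h.lt_or_eq with h' | h'
    · exact List.pairwise_iff_getElem.mp hl r' r hr' hr h'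
    · subst h'; rfl
  · rw [List.getD_eq_default _ _ hr]; exact Nat.zero_le _

/-- If the orbit type `μ` of `a` is not dominated by `λ`, then every Specht
polynomial of shape `λ` vanishes at `a`. -/
theorem specht_vanish_of_not_dominated {K : Type*} [Field K] {n : ℕ}
    {l μ : List ℕ} {T : Fin n → ℕ × ℕ}
    (hl : IsPartitionList n l) (hT : IsTableau n l T)
    (hμ : IsPartitionList n μ) (hdom : ¬ Dominates l μ)
    (a : Fin n → K) (ha : HasOrbitType a μ) :
    eval a (spechtPoly n K T) = 0 := by
  classical
  by_contra hne
  apply hdom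
  obtain ⟨hμsort, α, hαinj, hcover, hmult⟩ := ha
  -- within a column, `a` is injective
  have hfac : ∀ i i' : Fin n, (T i).2 = (T i').2 → (T i).1 < (T i').1 → a i ≠ a i' := by
    intro i i' hc hr heq
    apply hne
    rw [spechtPoly, map_prod]
    apply Finset.prod_eq_zero (i := (i, i'))
    · simp [hc, hr]
    · simp [heq]
  have hcolinj : ∀ i i' : Fin n, (T i).2 = (T i').2 → a i = a i' → i = i' := by
    intro i i' hc heq
    by_contra hne'
    have hr : (T i).1 ≠ (T i').1 := fun h => hne' (hT.1 (Prod.ext h hc))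
    rcases hr.lt_or_gt with h | h
    · exact hfac i i' hc h heq
    · exact hfac i' i hc.symm h heq.symm
  intro k
  set A : Fin μ.length → Finset (Fin n) := fun j => Finset.univ.filter (fun i => a i = α j) with hA
  set J : Finset (Fin μ.length) := Finset.univ.filter (fun j => (j : ℕ) < k) with hJ
  set B : Finset (Fin n) := J.biUnion A with hB
  have hAcard : ∀ j, (A j).card = μ.get j := by
    intro j
    have h1 := hmult j
    rw [mult] at h1
    have h2 : {i | a i = α j} = ↑(A j) := by ext i; simp [hA]
    rw [h2, Set.ncard_coe_finset] at h1
    exact h1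
  have hBmem : ∀ i : Fin n, i ∈ B ↔ ∃ j : Fin μ.length, (j : ℕ) < k ∧ a i = α j := by
    intro i; simp [hB, hJ, hA]
  have hBcard : B.card = ∑ j ∈ J, μ.get j := by
    rw [hB, Finset.card_biUnion]
    · exact Finset.sum_congr rfl (fun j _ => hAcard j)
    · intro j _ j' _ hjj'
      refine Finset.disjoint_left.mpr ?_
      intro i hi hi'
      simp only [hA, Finset.mem_filter] at hi hi'
      exact hjj' (hαinj (hi.2 ▸ hi'.2 ▸ rfl))
  -- (μ.take k).sum = B.card
  have hstepA : (μ.take k).sum = B.card := by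
    rw [hBcard, take_sum_eq]
    rw [← Finset.sum_filter_of_ne (p := fun r => r < μ.length)
      (by intro r _ h; by_contra hc; exact h (List.getD_eq_default _ _ (le_of_not_gt hc)))]
    refine (Finset.sum_bij'
      (i := fun (j : Fin μ.length) (_ : j ∈ J) => (j : ℕ))
      (j := fun r (hr : r ∈ (Finset.range k).filter (fun r => r < μ.length)) =>
        (⟨r, (Finset.mem_filter.mp hr).2⟩ : Fin μ.length))
      ?_ ?_ ?_ ?_ ?_).symm
    · intro j hj
      simp only [hJ, Finset.mem_filter, Finset.mem_univ, true_and] at hj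
      simp [hj, j.isLt]
    · intro r hr
      simp only [Finset.mem_filter, Finset.mem_range] at hr
      simp [hJ, hr.1]
    · intro j _; rfl
    · intro r _; rfl
    · intro j hj
      rw [List.getD_eq_getElem _ _ j.isLt]
      rfl
  -- the diagram of the first k rows
  set D : Finset (ℕ × ℕ) :=
    (Finset.range k).biUnion (fun r => (Finset.range (l.getD r 0)).image (fun c => (r, c))) with hD
  have hDmem : ∀ p : ℕ × ℕ, p ∈ D ↔ p.1 < k ∧ p.2 < l.getD p.1 0 := by
    intro p
    simp only [hD, Finset.mem_biUnion, Finset.mem_range, Finset.mem_image]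
    constructor
    · rintro ⟨r, hr, c, hc, rfl⟩; exact ⟨hr, hc⟩
    · rintro ⟨h1, h2⟩; exact ⟨p.1, h1, p.2, h2, rfl⟩
  have hDcard : D.card = (l.take k).sum := by
    rw [hD, Finset.card_biUnion, take_sum_eq]
    · refine Finset.sum_congr rfl (fun r _ => ?_)
      rw [Finset.card_image_of_injective _ (fun c c' h => (Prod.mk.injEq _ _ _ _).mp h |>.2),
        Finset.card_range]
    · intro r _ r' _ hrr'
      refine Finset.disjoint_left.mpr ?_
      rintro p hp hp'
      simp only [Finset.mem_image] at hp hp'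
      obtain ⟨c, _, rfl⟩ := hp
      obtain ⟨c', _, h⟩ := hp'
      exact hrr' ((Prod.mk.injEq _ _ _ _).mp h).1.symm
  -- the ranking map
  set rank : Fin n → ℕ :=
    fun i => (B.filter (fun i' => (T i').2 = (T i).2 ∧ i' < i)).card with hrank
  have hrankmono : ∀ i ∈ B, ∀ i' ∈ B, (T i).2 = (T i').2 → i < i' → rank i < rank i' := by
    intro i hi i' hi' hc hlt
    apply Finset.card_lt_card
    rw [Finset.ssubset_iff_of_subset]
    · exact ⟨i, Finset.mem_filter.mpr ⟨hi, hc, hlt⟩,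
        fun h => absurd (Finset.mem_filter.mp h).2.2 (lt_irrefl i)⟩
    · intro x hx
      obtain ⟨hxB, hxc, hxlt⟩ := Finset.mem_filter.mp hx
      exact Finset.mem_filter.mpr ⟨hxB, hxc.trans hc, hxlt.trans hlt⟩
  have hginj : Set.InjOn (fun i => (rank i, (T i).2)) ↑B := by
    intro i hi i' hi' h
    obtain ⟨h1, h2⟩ := Prod.mk.injEq _ _ _ _ ▸ h
    by_contra hne'
    rcases (Ne.lt_or_gt hne') with hlt | hlt
    · exact absurd h1 (Nat.ne_of_lt (hrankmono i hi i' hi' h2 hlt))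
    · exact absurd h1.symm (Nat.ne_of_lt (hrankmono i' hi' i hi h2.symm hlt))
  have hgmem : ∀ i ∈ B, (rank i, (T i).2) ∈ D := by
    intro i hi
    set c := (T i).2 with hc
    set S : Finset (Fin n) := B.filter (fun i' => (T i').2 = c) with hS
    have hiS : i ∈ S := Finset.mem_filter.mpr ⟨hi, rfl⟩
    have hrankS : rank i < S.card := by
      have h1 : rank i ≤ (S.erase i).card := by
        apply Finset.card_le_card
        intro x hx
        obtain ⟨hxB, hxc, hxlt⟩ := Finset.mem_filter.mp hx
        exact Finset.mem_erase.mpr ⟨ne_of_lt hxlt, Finset.mem_filter.mpr ⟨hxB, hxc⟩⟩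
      exact lt_of_le_of_lt h1 (Finset.card_erase_lt_of_mem hiS)
    have hSk : S.card ≤ k := by
      have := Finset.card_le_card_of_injOn
        (f := fun i' => if h : ∃ j : Fin μ.length, (j : ℕ) < k ∧ a i' = α j then (h.choose : ℕ) else 0)
        (s := S) (t := Finset.range k) ?_ ?_
      · simpa using this
      · intro i' hi'
        have hB' : i' ∈ B := (Finset.mem_filter.mp hi').1
        have hex := (hBmem i').mp hB'
        simp only [dif_pos hex]
        exact Finset.mem_range.mpr hex.choose_spec.1
      · intro x hx y hy hxy
        have hBx := (Finset.mem_filter.mp hx).1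
        have hBy := (Finset.mem_filter.mp hy).1
        have hex := (hBmem x).mp hBx
        have hey := (hBmem y).mp hBy
        simp only [dif_pos hex, dif_pos hey] at hxy
        have : hex.choose = hey.choose := Fin.val_injective hxy
        have hax : a x = a y := by
          rw [hex.choose_spec.2, hey.choose_spec.2, this]
        exact hcolinj x y ((Finset.mem_filter.mp hx).2.trans (Finset.mem_filter.mp hy).2.symm) hax
    set C : Finset ℕ := (Finset.range l.length).filter (fun r => c < l.getD r 0) with hC
    have hSC : S.card ≤ C.card := by
      apply Finset.card_le_card_of_injOn (f := fun i' => (T i').1)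
      · intro i' hi'
        have hcol := (Finset.mem_filter.mp hi').2
        have := (hT.2 (T i')).mp ⟨i', rfl⟩
        exact Finset.mem_filter.mpr ⟨Finset.mem_range.mpr this.1, hcol ▸ this.2⟩
      · intro x hx y hy hxy
        exact hT.1 (Prod.ext hxy ((Finset.mem_filter.mp hx).2.trans
          (Finset.mem_filter.mp hy).2.symm))
    have hcellvalid : c < l.getD (rank i) 0 := by
      by_contra hcont
      push_neg at hcont
      have hCsub : C ⊆ Finset.range (rank i) := by
        intro r hr
        obtain ⟨-, hr2⟩ := Finset.mem_filter.mp hr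
        rw [Finset.mem_range]
        by_contra hge
        push_neg at hge
        exact absurd (lt_of_lt_of_le hr2 (getD_anti hl.1 hge)) (not_lt.mpr hcont)
      have := (Finset.card_le_card hCsub).trans_eq (Finset.card_range _)
      omega
    exact (hDmem _).mpr ⟨lt_of_lt_of_le hrankS hSk, hcellvalid⟩
  calc (μ.take k).sum = B.card := hstepA
    _ ≤ D.card := Finset.card_le_card_of_injOn _ hgmem hginj
    _ = (l.take k).sum := hDcard
end

section
/- For any partition λ of n of positive length m and any positive integers i ≤ j, the partition λ + ⟨j⟩ is less than or equal to λ + ⟨i⟩ in the dominance order on partitions of n+1. -/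
open MvPolynomial

private lemma myPermSet (l : List ℕ) (a v : ℕ) (h : a < l.length) :
    (l.set a v).Perm (v :: l.eraseIdx a) := by
  rw [List.set_eq_take_cons_drop v h, List.eraseIdx_eq_take_drop_succ]
  exact List.perm_middle

private lemma mySumTakeSet : ∀ (l : List ℕ) (t m : ℕ) (h : t < l.length),
    ((l.set t (l[t] + 1)).take m).sum = (l.take m).sum + (if t < m then 1 else 0)
  | [], t, m, h => by simp at h
  | a :: as, t, 0, h => by simp
  | a :: as, 0, m+1, h => by
    simp [Nat.add_comm, Nat.add_assoc, Nat.add_left_comm]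
  | a :: as, t+1, m+1, h => by
    have ih := mySumTakeSet as t m (by simpa using h)
    simp only [List.set_cons_succ, List.take_succ_cons, List.sum_cons, List.getElem_cons_succ, ih,
      Nat.succ_lt_succ_iff]
    split_ifs <;> omega

private lemma myLtIndexOf : ∀ (l : List ℕ) (a s : ℕ) (hs : s < l.length),
    s < l.idxOf a → l[s] ≠ a
  | b :: bs, a, s, hs, hlt => by
    by_cases hba : b = a
    · subst hba; simp [List.idxOf_cons_self] at hlt
    · cases s with
      | zero => simpa using hba
      | succ s =>
        rw [List.idxOf_cons_ne _ hba] at hlt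
        exact myLtIndexOf bs a s (by simpa using hs) (Nat.lt_of_succ_lt_succ hlt)

private lemma addBox_spec {n : ℕ} {l : List ℕ} (hl : IsPartitionList n l)
    {k : ℕ} (hk1 : 0 < k) (hk : k ≤ l.length) :
    IsPartitionList (n + 1) (addBox l k) ∧
      ∀ m : ℕ, ((addBox l k).take m).sum
        = (l.take m).sum + (if l.idxOf (l.getD (k - 1) 0) < m then 1 else 0) := by
  have hp : k - 1 < l.length := by omega
  set y := l.getD (k - 1) 0 with hy
  have hyget : l[k - 1] = y := (List.getD_eq_getElem l 0 hp).symm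
  have hyl : y ∈ l := hyget ▸ l.getElem_mem hp
  set t := l.idxOf y with htdef
  have ht : t < l.length := List.idxOf_lt_length_iff.mpr hyl
  have htget : l[t] = y := List.getElem_idxOf ht
  have hmono : ∀ (a b : ℕ) (ha : a < l.length) (hb : b < l.length), a < b → l[a] ≥ l[b] :=
    List.pairwise_iff_getElem.mp hl.1
  set L := l.set t (y + 1) with hL
  have hLlen : L.length = l.length := List.length_set ..
  have hLget : ∀ (s : ℕ) (hs : s < l.length), L[s]'(by omega) = if t = s then y + 1 else l[s] := by
    intro s hs
    simp [hL, List.getElem_set]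
  have hLsorted : L.Pairwise (· ≥ ·) := by
    rw [List.pairwise_iff_getElem]
    intro a b ha hb hab
    rw [hLlen] at ha hb
    rw [hLget a ha, hLget b hb]
    split_ifs with h1 h2 h2
    · omega
    · have := hmono a b ha hb hab
      subst h1; omega
    · subst h2
      have h3 := hmono a t ha ht hab
      have h4 : l[a] ≠ y := myLtIndexOf l y a ha (by omega)
      omega
    · exact hmono a b ha hb hab
  have hperm : L.Perm (l.set (k - 1) (y + 1)) := by
    refine ((myPermSet l t (y + 1) ht).trans ?_).trans (myPermSet l (k - 1) (y + 1) hp).symm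
    refine List.Perm.cons _ ?_
    have h1 : (l.eraseIdx t).Perm (l.erase y) := by
      have := (List.erase_getElem ht).symm
      rwa [htget] at this
    have h2 : (l.erase y).Perm (l.eraseIdx (k - 1)) := by
      have := List.erase_getElem hp
      rwa [hyget] at this
    exact h1.trans h2
  have haddBox : addBox l k = L := by
    rw [addBox, if_pos hk]
    suffices hsort : Multiset.sort (↑(l.set (k - 1) (l.getD (k - 1) 0 + 1)) : Multiset ℕ) (· ≤ ·) = L.reverse by
      rw [hsort, List.reverse_reverse]
    refine (fun h1 h2 h3 => List.Perm.eq_of_pairwise' (r := (· ≤ ·)) h2 h3 h1) ?_ ?_ ?_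
    · have h1 : (Multiset.sort (↑(l.set (k - 1) (l.getD (k - 1) 0 + 1)) : Multiset ℕ) (· ≤ ·)).Perm
          (l.set (k - 1) (y + 1)) := by
        rw [← hy]
        exact Multiset.coe_eq_coe.mp (Multiset.sort_eq _ _)
      exact (h1.trans hperm.symm).trans L.reverse_perm.symm
    · exact Multiset.pairwise_sort _ _
    · rw [List.pairwise_reverse]
      exact hLsorted
  have hsum : ∀ m : ℕ, (L.take m).sum = (l.take m).sum + (if t < m then 1 else 0) := by
    intro m
    have := mySumTakeSet l t m ht
    rwa [htget] at this
  refine ⟨⟨haddBox ▸ hLsorted, ?_, ?_⟩, ?_⟩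
  · rw [haddBox]
    intro x hx
    have hx' : x ∈ (y + 1) :: l.eraseIdx t := (myPermSet l t (y + 1) ht).mem_iff.mp hx
    rcases List.mem_cons.mp hx' with h | h
    · omega
    · exact hl.2.1 x (List.mem_of_mem_eraseIdx h)
  · rw [haddBox]
    have h1 : L.take l.length = L := by
      rw [← hLlen]; exact List.take_length
    have := hsum l.length
    rw [h1, if_pos ht] at this
    rw [this, List.take_length, hl.2.2]
  · intro m
    rw [haddBox]
    exact hsum m

private lemma addBox_spec' {n : ℕ} {l : List ℕ} (hl : IsPartitionList n l)
    {k : ℕ} (hk : l.length < k) :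
    IsPartitionList (n + 1) (addBox l k) ∧
      ∀ m : ℕ, ((addBox l k).take m).sum = (l.take m).sum + (if l.length < m then 1 else 0) := by
  have haddBox : addBox l k = l ++ [1] := by
    rw [addBox, if_neg (by omega)]
  rw [haddBox]
  refine ⟨⟨?_, ?_, ?_⟩, ?_⟩
  · rw [List.pairwise_append]
    refine ⟨hl.1, by simp, ?_⟩
    intro a ha b hb
    have := hl.2.1 a ha
    simp at hb
    omega
  · intro x hx
    rcases List.mem_append.mp hx with h | h
    · exact hl.2.1 x h
    · simp at h; omega
  · rw [List.sum_append, hl.2.2]; simp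
  · intro m
    rw [List.take_append, List.sum_append]
    congr 1
    by_cases hm : l.length < m
    · rw [if_pos hm, List.take_of_length_le (by simp; omega)]; simp
    · rw [if_neg hm]
      have : m - l.length = 0 := by omega
      rw [this]; simp

private lemma indexOf_mono {n : ℕ} {l : List ℕ} (hl : IsPartitionList n l) {i j : ℕ}
    (hi : 0 < i) (hij : i ≤ j) (hj : j ≤ l.length) :
    l.idxOf (l.getD (i - 1) 0) ≤ l.idxOf (l.getD (j - 1) 0) := by
  have hpi : i - 1 < l.length := by omega
  have hpj : j - 1 < l.length := by omega
  set yi := l.getD (i - 1) 0 with hyi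
  set yj := l.getD (j - 1) 0 with hyj
  have hyiget : l[i - 1] = yi := (List.getD_eq_getElem l 0 hpi).symm
  have hyjget : l[j - 1] = yj := (List.getD_eq_getElem l 0 hpj).symm
  have hmono : ∀ (a b : ℕ) (ha : a < l.length) (hb : b < l.length), a ≤ b → l[a] ≥ l[b] := by
    intro a b ha hb hab
    rcases Nat.lt_or_ge a b with h | h
    · exact List.pairwise_iff_getElem.mp hl.1 a b ha hb h
    · have : a = b := by omega
      subst this; exact le_refl _
  have hti : l.idxOf yi < l.length := List.idxOf_lt_length_iff.mpr (hyiget ▸ l.getElem_mem hpi)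
  have htj : l.idxOf yj < l.length := List.idxOf_lt_length_iff.mpr (hyjget ▸ l.getElem_mem hpj)
  by_contra hcon
  push_neg at hcon
  have h1 : l[l.idxOf yj] = yj := List.getElem_idxOf htj
  have h2 : l[l.idxOf yi] = yi := List.getElem_idxOf hti
  have h3 : l[l.idxOf yj] ≥ l[l.idxOf yi] := hmono _ _ htj hti (by omega)
  have h4 : l[i - 1] ≥ l[j - 1] := hmono _ _ hpi hpj (by omega)
  have h5 : yj = yi := by omega
  exact myLtIndexOf l yi (l.idxOf yj) htj hcon (h5 ▸ h1)

/-- For `i ≤ j`, `λ + ⟨j⟩ ⊴ λ + ⟨i⟩` in the dominance order on partitions of `n+1`. -/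
theorem addBox_dominates {n : ℕ} {l : List ℕ} (hl : IsPartitionList n l)
    (hlen : 0 < l.length) {i j : ℕ} (hi : 0 < i) (hij : i ≤ j) :
    IsPartitionList (n + 1) (addBox l i) ∧ IsPartitionList (n + 1) (addBox l j) ∧
      Dominates (addBox l i) (addBox l j) := by
  rcases le_or_gt j l.length with hj | hj
  · obtain ⟨hPi, hSi⟩ := addBox_spec hl hi (le_trans hij hj)
    obtain ⟨hPj, hSj⟩ := addBox_spec hl (by omega) hj
    have hmono := indexOf_mono hl hi hij hj
    refine ⟨hPi, hPj, fun m => ?_⟩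
    rw [hSi m, hSj m]
    split_ifs <;> omega
  · rcases le_or_gt i l.length with hi' | hi'
    · obtain ⟨hPi, hSi⟩ := addBox_spec hl hi hi'
      obtain ⟨hPj, hSj⟩ := addBox_spec' hl hj
      refine ⟨hPi, hPj, fun m => ?_⟩
      rw [hSi m, hSj m]
      have hp : i - 1 < l.length := by omega
      have ht : l.idxOf (l.getD (i - 1) 0) < l.length :=
        List.idxOf_lt_length_iff.mpr (((List.getD_eq_getElem l 0 hp).symm) ▸ l.getElem_mem hp)
      split_ifs <;> omega
    · obtain ⟨hPi, hSi⟩ := addBox_spec' hl hi'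
      obtain ⟨hPj, hSj⟩ := addBox_spec' hl hj
      refine ⟨hPi, hPj, fun m => ?_⟩
      rw [hSi m, hSj m]
end

section
/- Let K be an infinite field, F an upper filter of partitions of n in dominance order, and f = g_d x_n^d + ... + g_1 x_n + g_0 ∈ K[x_1,...,x_n] with g_i ∈ K[x_1,...,x_{n-1}] and g_d ≠ 0, such that f vanishes on all points of K^n whose orbit type lies in F. Then each g_i vanishes on all points of K^{n-1} whose orbit type lies in F_{d+1} = {μ : μ + ⟨d+1⟩ ∈ F}. -/
open MvPolynomial

lemma mult_eq_card {K : Type*} [DecidableEq K] {n : ℕ} (a : Fin n → K) (v : K) :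
    mult a v = (Finset.univ.filter (fun i => a i = v)).card := by
  rw [mult, show {i | a i = v} = ↑(Finset.univ.filter fun i => a i = v) by ext; simp]
  exact Set.ncard_coe_finset _

lemma mult_snoc {K : Type*} [DecidableEq K] {n : ℕ} (b : Fin n → K) (t v : K) :
    mult (Fin.snoc b t) v = mult b v + if t = v then 1 else 0 := by
  rw [mult_eq_card, mult_eq_card, Finset.card_filter, Finset.card_filter,
    Fin.sum_univ_castSucc]
  simp [Fin.snoc_castSucc, Fin.snoc_last]

lemma mult_pos_iff {K : Type*} [DecidableEq K] {n : ℕ} (a : Fin n → K) (v : K) :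
    0 < mult a v ↔ ∃ i, a i = v := by
  rw [mult_eq_card, Finset.card_pos]
  constructor
  · rintro ⟨i, hi⟩; exact ⟨i, by simpa using hi⟩
  · rintro ⟨i, hi⟩; exact ⟨i, by simpa using hi⟩

lemma list_decomp (l : List ℕ) (i : ℕ) (h : i < l.length) :
    l = l.take i ++ l[i] :: l.drop (i + 1) := by
  conv_lhs => rw [← List.take_append_drop i l, List.drop_eq_getElem_cons h]

lemma sum_set_add (l : List ℕ) (i : ℕ) (h : i < l.length) (v : ℕ) :
    (l.set i v).sum + l[i] = l.sum + v := by
  rw [List.set_eq_take_cons_drop v h]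
  conv_rhs => rw [list_decomp l i h]
  rw [List.sum_append, List.sum_cons, List.sum_append, List.sum_cons]
  omega

lemma sum_take_set (l : List ℕ) (i : ℕ) (h : i < l.length) (k : ℕ) :
    ((l.set i (l[i] + 1)).take k).sum = (l.take k).sum + if i < k then 1 else 0 := by
  rw [List.take_set]
  by_cases hik : i < k
  · have hlt : i < (l.take k).length := by simp [List.length_take]; omega
    have := sum_set_add (l.take k) i hlt (l[i] + 1)
    rw [List.getElem_take] at this
    simp [hik]
    omega
  · rw [List.set_eq_of_length_le (by simp [List.length_take]; omega)]
    simp [hik]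

lemma sum_set_succ (l : List ℕ) (i : ℕ) (h : i < l.length) :
    (l.set i (l[i] + 1)).sum = l.sum + 1 := by
  have := sum_set_add l i h (l[i] + 1)
  omega

noncomputable def minIdx (μ : List ℕ) (j : ℕ) : ℕ :=
  Nat.find (⟨j, rfl⟩ : ∃ i, μ.getD i 0 = μ.getD j 0)

lemma minIdx_le (μ : List ℕ) (j : ℕ) : minIdx μ j ≤ j :=
  Nat.find_le rfl

lemma getD_minIdx (μ : List ℕ) (j : ℕ) : μ.getD (minIdx μ j) 0 = μ.getD j 0 :=
  Nat.find_spec (⟨j, rfl⟩ : ∃ i, μ.getD i 0 = μ.getD j 0)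

lemma minIdx_min (μ : List ℕ) (j : ℕ) {m : ℕ} (h : m < minIdx μ j) :
    μ.getD m 0 ≠ μ.getD j 0 :=
  Nat.find_min (⟨j, rfl⟩ : ∃ i, μ.getD i 0 = μ.getD j 0) h

noncomputable def inc (μ : List ℕ) (j : ℕ) : List ℕ :=
  μ.set (minIdx μ j) (μ.getD (minIdx μ j) 0 + 1)

lemma inc_length (μ : List ℕ) (j : ℕ) : (inc μ j).length = μ.length := by
  simp [inc]

lemma sorted_getD {μ : List ℕ} (hs : μ.Pairwise (· ≥ ·)) {i j : ℕ} (hij : i ≤ j)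
    (hj : j < μ.length) : μ.getD j 0 ≤ μ.getD i 0 := by
  rcases eq_or_lt_of_le hij with rfl | hij
  · exact le_refl _
  · rw [List.getD_eq_getElem _ _ hj, List.getD_eq_getElem _ _ (lt_trans hij hj)]
    exact List.pairwise_iff_getElem.1 hs i j _ _ hij

lemma minIdx_lt_length {μ : List ℕ} {j : ℕ} (hj : j < μ.length) :
    minIdx μ j < μ.length := lt_of_le_of_lt (minIdx_le μ j) hj

lemma inc_sorted {μ : List ℕ} (hs : μ.Pairwise (· ≥ ·)) {j : ℕ} (hj : j < μ.length) :
    (inc μ j).Pairwise (· ≥ ·) := by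
  have hi0 := minIdx_lt_length hj
  rw [List.pairwise_iff_getElem]
  intro p q hp hq hpq
  rw [inc_length] at hp hq
  have hgp : (inc μ j)[p]'(by rwa [inc_length]) =
      if minIdx μ j = p then μ.getD (minIdx μ j) 0 + 1 else μ[p] := List.getElem_set _
  have hgq : (inc μ j)[q]'(by rwa [inc_length]) =
      if minIdx μ j = q then μ.getD (minIdx μ j) 0 + 1 else μ[q] := List.getElem_set _
  rw [hgp, hgq]
  have hsort : ∀ {a b : ℕ} (ha : a < μ.length) (hb : b < μ.length), a ≤ b → μ[b] ≤ μ[a] := by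
    intro a b ha hb hab
    rcases eq_or_lt_of_le hab with rfl | h
    · exact le_refl _
    · exact List.pairwise_iff_getElem.1 hs a b ha hb h
  split <;> split
  · omega
  · next h1 h2 =>
      have h3 := hsort hp hq (le_of_lt hpq)
      rw [List.getD_eq_getElem _ _ hi0]
      have h5 : μ[minIdx μ j]'hi0 = μ[p] := by simp only [h1]
      omega
  · next h1 h2 =>
      have hne : μ.getD p 0 ≠ μ.getD j 0 := minIdx_min μ j (h2 ▸ hpq)
      have h3 : μ[q] ≤ μ[p] := hsort hp hq (le_of_lt hpq)
      have h4 : μ.getD q 0 = μ.getD j 0 := h2 ▸ getD_minIdx μ j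
      rw [List.getD_eq_getElem _ _ hp] at hne
      rw [List.getD_eq_getElem _ _ hq] at h4
      rw [List.getD_eq_getElem _ _ hi0]
      have h5 : μ[minIdx μ j]'hi0 = μ[q] := by simp only [h2]
      omega
  · exact hsort hp hq (le_of_lt hpq)

lemma sum_take_inc (μ : List ℕ) {j : ℕ} (hj : j < μ.length) (k : ℕ) :
    ((inc μ j).take k).sum = (μ.take k).sum + if minIdx μ j < k then 1 else 0 := by
  have hi0 := minIdx_lt_length hj
  unfold inc
  rw [List.getD_eq_getElem _ _ hi0]
  exact sum_take_set μ _ hi0 k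

lemma minIdx_mono {μ : List ℕ} (hs : μ.Pairwise (· ≥ ·)) {j j' : ℕ} (hjj : j ≤ j')
    (hj' : j' < μ.length) : minIdx μ j ≤ minIdx μ j' := by
  by_contra hlt
  push_neg at hlt
  have h1 : μ.getD (minIdx μ j') 0 = μ.getD j' 0 := getD_minIdx μ j'
  have h2 : μ.getD (minIdx μ j') 0 ≠ μ.getD j 0 := minIdx_min μ j hlt
  have h3 : μ.getD j' 0 ≤ μ.getD j 0 := sorted_getD hs hjj hj'
  have h4 : μ.getD j 0 ≤ μ.getD (minIdx μ j') 0 := by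
    apply sorted_getD hs _ (lt_of_le_of_lt hjj hj')
    have := minIdx_le μ j
    omega
  omega

lemma inc_dominates {μ : List ℕ} (hs : μ.Pairwise (· ≥ ·)) {j j' : ℕ} (hjj : j ≤ j')
    (hj' : j' < μ.length) : Dominates (inc μ j) (inc μ j') := by
  intro k
  rw [sum_take_inc μ (lt_of_le_of_lt hjj hj') k, sum_take_inc μ hj' k]
  have := minIdx_mono hs hjj hj'
  split <;> split <;> omega


lemma set_perm_cons (l : List ℕ) (i : ℕ) (h : i < l.length) (v : ℕ) :
    (l.set i v).Perm (v :: (l.take i ++ l.drop (i + 1))) := by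
  rw [List.set_eq_take_cons_drop v h]
  exact List.perm_middle

lemma self_perm_cons (l : List ℕ) (i : ℕ) (h : i < l.length) :
    l.Perm (l[i] :: (l.take i ++ l.drop (i + 1))) := by
  conv_lhs => rw [← List.take_append_drop i l, List.drop_eq_getElem_cons h]
  exact List.perm_middle

lemma set_perm_set (l : List ℕ) (i i' : ℕ) (hi : i < l.length) (hi' : i' < l.length)
    (h : l[i] = l[i']) (v : ℕ) : (l.set i v).Perm (l.set i' v) := by
  have p1 := set_perm_cons l i hi v
  have p2 := set_perm_cons l i' hi' v
  have q1 := self_perm_cons l i hi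
  have q2 := self_perm_cons l i' hi'
  rw [h] at q1
  have : (l.take i ++ l.drop (i + 1)).Perm (l.take i' ++ l.drop (i' + 1)) :=
    (q1.symm.trans q2).cons_inv
  exact p1.trans ((this.cons v).trans p2.symm)

lemma sorted_desc_sort_eq (l : List ℕ) (m : Multiset ℕ) (h : (↑l : Multiset ℕ) = m)
    (hs : l.Pairwise (· ≥ ·)) : (m.sort (· ≤ ·)).reverse = l := by
  have hperm : (m.sort (· ≤ ·)).Perm l.reverse := by
    rw [← Multiset.coe_eq_coe, Multiset.sort_eq, ← h, Multiset.coe_eq_coe]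
    exact (List.reverse_perm l).symm
  have hs2 : (l.reverse).Pairwise (· ≤ ·) := by
    rw [List.pairwise_reverse]
    exact hs.imp (fun h => h)
  rw [List.Perm.eq_of_pairwise' (Multiset.pairwise_sort _ _) hs2 hperm, List.reverse_reverse]

lemma addBox_eq_inc {μ : List ℕ} (hs : μ.Pairwise (· ≥ ·)) {j : ℕ} (hj : j < μ.length) :
    addBox μ (j + 1) = inc μ j := by
  have hi0 := minIdx_lt_length hj
  unfold addBox
  rw [if_pos (by omega)]
  simp only [Nat.add_sub_cancel]
  apply sorted_desc_sort_eq _ _ _ (inc_sorted hs hj)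
  rw [Multiset.coe_eq_coe]
  unfold inc
  rw [getD_minIdx μ j]
  exact set_perm_set μ (minIdx μ j) j hi0 hj
    (by rw [← List.getD_eq_getElem _ 0 hi0, ← List.getD_eq_getElem _ 0 hj]; exact getD_minIdx μ j) _

lemma addBox_eq_append {μ : List ℕ} {k : ℕ} (h : μ.length < k) : addBox μ k = μ ++ [1] := by
  unfold addBox; rw [if_neg (by omega)]

lemma inc_partition {n : ℕ} {μ : List ℕ} (hp : IsPartitionList n μ) {j : ℕ}
    (hj : j < μ.length) : IsPartitionList (n + 1) (inc μ j) := by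
  obtain ⟨hs, hpos, hsum⟩ := hp
  have hi0 := minIdx_lt_length hj
  refine ⟨inc_sorted hs hj, ?_, ?_⟩
  · intro x hx
    rcases List.mem_or_eq_of_mem_set hx with h | h
    · exact hpos x h
    · omega
  · have := sum_set_add μ (minIdx μ j) hi0 (μ.getD (minIdx μ j) 0 + 1)
    have h2 : μ.getD (minIdx μ j) 0 = μ[minIdx μ j] := List.getD_eq_getElem _ 0 hi0
    unfold inc
    omega

lemma append_one_partition {n : ℕ} {μ : List ℕ} (hp : IsPartitionList n μ) :
    IsPartitionList (n + 1) (μ ++ [1]) := by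
  obtain ⟨hs, hpos, hsum⟩ := hp
  refine ⟨?_, ?_, by simp [hsum]⟩
  · rw [List.pairwise_append]
    exact ⟨hs, List.pairwise_singleton _ _, fun a ha b hb => by
      simp at hb; subst hb; exact hpos a ha⟩
  · intro x hx
    rcases List.mem_append.1 hx with h | h
    · exact hpos x h
    · simp at h; omega

lemma orbit_snoc_val {K : Type*} [DecidableEq K] {n : ℕ} {b : Fin n → K} {μ : List ℕ}
    (hs : μ.Pairwise (· ≥ ·)) (α : Fin μ.length → K) (hinj : Function.Injective α)
    (hcov : ∀ i, ∃ j, b i = α j) (hmult : ∀ j, mult b (α j) = μ.get j)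
    (j : Fin μ.length) : HasOrbitType (Fin.snoc b (α j)) (inc μ (j : ℕ)) := by
  have hi0lt : minIdx μ (j : ℕ) < μ.length := minIdx_lt_length j.isLt
  set i0 : Fin μ.length := ⟨minIdx μ (j : ℕ), hi0lt⟩ with hi0def
  have hlen := inc_length μ (j : ℕ)
  set ee : Fin (inc μ (j : ℕ)).length → Fin μ.length := fun i => Fin.cast hlen i with he
  have hee : ∀ x : Fin μ.length, ee (Fin.cast hlen.symm x) = x := fun x => Fin.ext rfl
  have heeval : ∀ x : Fin (inc μ (j : ℕ)).length, ((ee x : Fin μ.length) : ℕ) = (x : ℕ) :=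
    fun _ => rfl
  refine ⟨inc_sorted hs j.isLt, fun i => α (Equiv.swap i0 j (ee i)), ?_, ?_, ?_⟩
  · intro x y hxy
    have h1 := (Equiv.swap i0 j).injective (hinj hxy)
    have h2 : ((ee x : Fin μ.length) : ℕ) = ((ee y : Fin μ.length) : ℕ) := congrArg Fin.val h1
    exact Fin.ext h2
  · intro i
    refine Fin.lastCases ?_ (fun i => ?_) i
    · refine ⟨Fin.cast hlen.symm i0, ?_⟩
      beta_reduce
      rw [hee, Equiv.swap_apply_left, Fin.snoc_last]
    · obtain ⟨j', hj'⟩ := hcov i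
      refine ⟨Fin.cast hlen.symm (Equiv.swap i0 j j'), ?_⟩
      beta_reduce
      rw [hee, Equiv.swap_apply_self, Fin.snoc_castSucc]
      exact hj'
  · intro i
    beta_reduce
    set w := Equiv.swap i0 j (ee i) with hw
    rw [mult_snoc]
    have hiff : (α j = α w) ↔ j = w := ⟨fun h => hinj h, fun h => congrArg α h⟩
    have hget : (inc μ (j : ℕ)).get i =
        if minIdx μ (j : ℕ) = (i : ℕ) then μ.getD (minIdx μ (j : ℕ)) 0 + 1
        else μ[(i : ℕ)]'(lt_of_lt_of_eq i.isLt hlen) := by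
      rw [List.get_eq_getElem]
      exact List.getElem_set (i.isLt)
    rw [hget]
    by_cases hcase : (ee i) = i0
    · have hwj : w = j := by rw [hw, hcase, Equiv.swap_apply_left]
      have hii : minIdx μ (j : ℕ) = (i : ℕ) := (heeval i ▸ congrArg Fin.val hcase).symm
      rw [hwj, if_pos rfl, hmult j, if_pos hii, getD_minIdx μ (j : ℕ),
        List.getD_eq_getElem _ 0 j.isLt]
      rfl
    · have hii : ¬ (minIdx μ (j : ℕ) = (i : ℕ)) := by
        intro h
        exact hcase (Fin.ext (show ((ee i : Fin μ.length) : ℕ) = (i0 : ℕ) from h.symm))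
      by_cases hcase2 : (ee i) = j
      · have hwi0 : w = i0 := by rw [hw, hcase2, Equiv.swap_apply_right]
        have hne : ¬ (j = w) := by
          rw [hwi0]; intro h; exact hcase (hcase2.trans h)
        rw [if_neg (fun h => hne (hiff.1 h)), hmult w, hwi0, if_neg hii]
        have hji : ((j : Fin μ.length) : ℕ) = (i : ℕ) :=
          (heeval i ▸ congrArg Fin.val hcase2).symm
        have h1 : μ.get i0 = μ.getD (minIdx μ (j : ℕ)) 0 :=
          (List.getD_eq_getElem _ 0 hi0lt).symm
        have h2 : μ.getD (minIdx μ (j : ℕ)) 0 = μ.getD (j : ℕ) 0 := getD_minIdx μ (j : ℕ)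
        have h3 : μ.getD (j : ℕ) 0 = μ[(i : ℕ)]'(lt_of_lt_of_eq i.isLt hlen) := by
          rw [List.getD_eq_getElem _ 0 j.isLt]
          exact (congrArg μ.get hcase2).symm
        omega
      · have hwe : w = ee i := by rw [hw, Equiv.swap_apply_of_ne_of_ne hcase hcase2]
        have hne : ¬ (j = w) := by rw [hwe]; exact fun h => hcase2 h.symm
        rw [if_neg (fun h => hne (hiff.1 h)), hmult w, hwe, if_neg hii]
        simp only [Nat.add_zero]
        rfl

lemma orbit_snoc_fresh {K : Type*} [DecidableEq K] {n : ℕ} {b : Fin n → K} {μ : List ℕ}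
    (hs : μ.Pairwise (· ≥ ·)) (hsort1 : (μ ++ [1]).Pairwise (· ≥ ·))
    (hpos : ∀ x ∈ μ, 0 < x)
    (α : Fin μ.length → K) (hinj : Function.Injective α)
    (hcov : ∀ i, ∃ j, b i = α j) (hmult : ∀ j, mult b (α j) = μ.get j)
    (t : K) (ht : ∀ i, b i ≠ t) : HasOrbitType (Fin.snoc b t) (μ ++ [1]) := by
  have hb : ∀ j : Fin μ.length, α j ≠ t := by
    intro j h
    obtain ⟨i, hi⟩ := (mult_pos_iff b (α j)).1 (by rw [hmult j]; exact hpos _ (List.get_mem μ j))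
    exact ht i (hi.trans h)
  have hmt : mult b t = 0 := by
    by_contra h
    obtain ⟨i, hi⟩ := (mult_pos_iff b t).1 (Nat.pos_of_ne_zero h)
    exact ht i hi
  have hlen : (μ ++ [1]).length = μ.length + 1 := by simp
  refine ⟨hsort1, fun i => if h : (i : ℕ) < μ.length then α ⟨i, h⟩ else t, ?_, ?_, ?_⟩
  · intro x y hxy
    beta_reduce at hxy
    by_cases hx : (x : ℕ) < μ.length <;> by_cases hy : (y : ℕ) < μ.length
    · rw [dif_pos hx, dif_pos hy] at hxy
      have h2 := congrArg Fin.val (hinj hxy)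
      exact Fin.ext h2
    · rw [dif_pos hx, dif_neg hy] at hxy; exact absurd hxy (hb _)
    · rw [dif_neg hx, dif_pos hy] at hxy; exact absurd hxy.symm (hb _)
    · have hx' := lt_of_lt_of_eq x.isLt hlen
      have hy' := lt_of_lt_of_eq y.isLt hlen
      exact Fin.ext (by omega)
  · intro i
    refine Fin.lastCases ?_ (fun i => ?_) i
    · refine ⟨⟨μ.length, by omega⟩, ?_⟩
      beta_reduce
      rw [Fin.snoc_last, dif_neg (by simp)]
    · obtain ⟨j, hj⟩ := hcov i
      refine ⟨⟨(j : ℕ), by have := j.isLt; omega⟩, ?_⟩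
      beta_reduce
      rw [Fin.snoc_castSucc, dif_pos (by simpa using j.isLt)]
      exact hj
  · intro i
    beta_reduce
    rw [mult_snoc]
    by_cases h : (i : ℕ) < μ.length
    · rw [dif_pos h, if_neg (fun hh => hb _ hh.symm), hmult, List.get_eq_getElem,
        List.get_eq_getElem, List.getElem_append_left h]
      exact Nat.add_zero _
    · rw [dif_neg h, if_pos rfl, hmt, List.get_eq_getElem]
      have hi := lt_of_lt_of_eq i.isLt hlen
      have hieq : (i : ℕ) = μ.length := by omega
      rw [List.getElem_append_right (by omega)]
      simp [hieq]

/-- Key lemma: if `f = Σ g_k x_n^k` (with `g_d ≠ 0`) vanishes on all points whose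
orbit type lies in the upper filter `F`, then each `g_k` vanishes on all points
whose orbit type lies in `F_{d+1}`. -/
theorem key_lemma {K : Type*} [Field K] [Infinite K] {n : ℕ} {F : Set (List ℕ)}
    (hF : IsUpperFilter (n + 1) F) {d : ℕ} (g : ℕ → MvPolynomial (Fin n) K)
    (hgd : g d ≠ 0) (f : MvPolynomial (Fin (n + 1)) K)
    (hf : f = ∑ k ∈ Finset.range (d + 1),
      rename (Fin.castSucc) (g k) * X (Fin.last n) ^ k)
    (hvan : ∀ a : Fin (n + 1) → K, (∃ l ∈ F, HasOrbitType a l) → eval a f = 0) :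
    ∀ k ≤ d, ∀ b : Fin n → K,
      (∃ μ, IsPartitionList n μ ∧ addBox μ (d + 1) ∈ F ∧ HasOrbitType b μ) →
        eval b (g k) = 0 := by
  classical
  intro k hk b hb
  obtain ⟨μ, hμpart, hμF, hμb⟩ := hb
  obtain ⟨hμs, α, hinj, hcov, hmult⟩ := hμb
  set P : Polynomial K := ∑ m ∈ Finset.range (d + 1),
    Polynomial.C (eval b (g m)) * Polynomial.X ^ m with hP
  have hdeg : P.natDegree ≤ d := by
    apply Polynomial.natDegree_sum_le_of_forall_le
    intro i hi
    refine (Polynomial.natDegree_C_mul_le _ _).trans ?_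
    rw [Polynomial.natDegree_X_pow]
    exact Nat.lt_succ_iff.mp (Finset.mem_range.1 hi)
  have hcoeff : P.coeff k = eval b (g k) := by
    rw [hP, Polynomial.finset_sum_coeff]
    rw [Finset.sum_eq_single k]
    · rw [Polynomial.coeff_C_mul, Polynomial.coeff_X_pow, if_pos rfl, mul_one]
    · intro m hm hmk
      rw [Polynomial.coeff_C_mul, Polynomial.coeff_X_pow, if_neg (fun h => hmk h.symm), mul_zero]
    · intro hkk
      exact absurd (Finset.mem_range.2 (by omega)) hkk
  have hevalP : ∀ t : K, eval (Fin.snoc b t) f = Polynomial.eval t P := by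
    intro t
    rw [hf, hP, map_sum, Polynomial.eval_finset_sum]
    apply Finset.sum_congr rfl
    intro m _
    rw [eval_mul, eval_pow, eval_X, Fin.snoc_last, Polynomial.eval_mul,
      Polynomial.eval_pow, Polynomial.eval_C, Polynomial.eval_X]
    congr 1
    rw [eval_rename]
    have hcomp : (Fin.snoc b t : Fin (n + 1) → K) ∘ Fin.castSucc = b := by
      funext i; simp
    rw [hcomp]
  have hroot : ∀ t : K, (∃ l ∈ F, HasOrbitType (Fin.snoc b t) l) →
      Polynomial.eval t P = 0 := by
    intro t h
    rw [← hevalP]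
    exact hvan _ h
  have hP0 : P = 0 := by
    by_cases hdl : d + 1 ≤ μ.length
    · have hdlt : d < μ.length := hdl
      have hμF' : inc μ d ∈ F := by
        rwa [addBox_eq_inc hμs hdlt] at hμF
      apply Polynomial.eq_zero_of_natDegree_lt_card_of_eval_eq_zero P
        (f := fun i : Fin (d + 1) => α (Fin.castLE hdl i))
      · intro x y hxy
        have h1 := hinj hxy
        have h2 := congrArg Fin.val h1
        exact Fin.ext h2
      · intro i
        apply hroot
        set j : Fin μ.length := Fin.castLE hdl i with hj
        refine ⟨inc μ (j : ℕ), ?_, orbit_snoc_val hμs α hinj hcov hmult j⟩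
        refine hF.2 _ _ (inc_partition hμpart j.isLt) hμF' ?_
        exact inc_dominates hμs (show (j : ℕ) ≤ d by
          have := i.isLt; simp [hj]; omega) hdlt
      · rw [Fintype.card_fin]
        omega
    · apply Polynomial.eq_zero_of_infinite_isRoot
      apply Set.Infinite.mono (s := (Set.range b)ᶜ)
      · intro t ht
        show Polynomial.IsRoot P t
        apply hroot
        have htne : ∀ i, b i ≠ t := by
          intro i hi
          exact ht ⟨i, hi⟩
        have hpart1 : IsPartitionList (n + 1) (μ ++ [1]) := append_one_partition hμpart
        refine ⟨μ ++ [1], ?_, orbit_snoc_fresh hμs hpart1.1 hμpart.2.1 α hinj hcov hmult t htne⟩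
        rwa [addBox_eq_append (by omega)] at hμF
      · exact (Set.finite_range b).infinite_compl
  rw [← hcoeff, hP0, Polynomial.coeff_zero]
end

section
/- Let T be a column standard tableau of shape λ (a partition of n), and suppose the number i appears in the d_i-th row of T for each i. Then the initial monomial of the Specht polynomial f_T with respect to the lexicographic order with x_1 < x_2 < ... < x_n equals the product over i of x_i^{d_i - 1}. -/
open MvPolynomial

lemma lexLt_irrefl {n : ℕ} (a : Fin n →₀ ℕ) : ¬ lexLt a a := by
  rintro ⟨i, hi, -⟩; exact lt_irrefl _ hi

lemma lexLt_trans {n : ℕ} {a b c : Fin n →₀ ℕ} (h1 : lexLt a b) (h2 : lexLt b c) :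
    lexLt a c := by
  obtain ⟨i, hi, hie⟩ := h1
  obtain ⟨k, hk, hke⟩ := h2
  rcases lt_trichotomy i k with h | h | h
  · exact ⟨k, by rw [hie k h]; exact hk, fun j hj => (hie j (h.trans hj)).trans (hke j hj)⟩
  · subst h; exact ⟨i, hi.trans hk, fun j hj => (hie j hj).trans (hke j hj)⟩
  · exact ⟨i, hi.trans_eq (hke i h), fun j hj => (hie j hj).trans (hke j (h.trans hj))⟩

lemma lexLt_add_right {n : ℕ} {a b : Fin n →₀ ℕ} (c : Fin n →₀ ℕ) (h : lexLt a b) :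
    lexLt (a + c) (b + c) := by
  obtain ⟨i, hi, hie⟩ := h
  exact ⟨i, by simpa using hi, fun j hj => by simp [hie j hj]⟩

lemma lexLt_add' {n : ℕ} {x a y b : Fin n →₀ ℕ} (h1 : lexLt x a) (h2 : y = b ∨ lexLt y b) :
    lexLt (x + y) (a + b) := by
  rcases h2 with rfl | h2
  · exact lexLt_add_right _ h1
  · exact lexLt_trans (lexLt_add_right _ h1)
      (by rw [add_comm a y, add_comm a b]; exact lexLt_add_right _ h2)

lemma isInitialMon_mul {K : Type*} [Field K] {n : ℕ} {f g : MvPolynomial (Fin n) K}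
    {a b : Fin n →₀ ℕ} (hf : IsInitialMon lexLt f a) (hg : IsInitialMon lexLt g b) :
    IsInitialMon lexLt (f * g) (a + b) := by
  classical
  have hle : ∀ x ∈ f.support, x = a ∨ lexLt x a :=
    fun x hx => (em (x = a)).imp id (fun h => hf.2 x hx h)
  have hge : ∀ y ∈ g.support, y = b ∨ lexLt y b :=
    fun y hy => (em (y = b)).imp id (fun h => hg.2 y hy h)
  constructor
  · rw [mem_support_iff, coeff_mul]
    have key : ∑ p ∈ Finset.HasAntidiagonal.antidiagonal (a + b), coeff p.1 f * coeff p.2 g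
        = coeff a f * coeff b g := by
      refine Finset.sum_eq_single_of_mem (a, b) (Finset.HasAntidiagonal.mem_antidiagonal.mpr rfl) ?_
      rintro ⟨x, y⟩ hxy hne
      rcases eq_or_ne (coeff x f) 0 with h | h
      · rw [h, zero_mul]
      rcases eq_or_ne (coeff y g) 0 with h' | h'
      · rw [h', mul_zero]
      exfalso
      have hsum : x + y = a + b := Finset.HasAntidiagonal.mem_antidiagonal.mp hxy
      rcases hle x (mem_support_iff.mpr h) with rfl | hx
      · exact hne (Prod.ext rfl (add_left_cancel hsum))
      · have hlt := lexLt_add' hx (hge y (mem_support_iff.mpr h'))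
        rw [hsum] at hlt
        exact lexLt_irrefl _ hlt
    rw [key]
    exact mul_ne_zero (mem_support_iff.mp hf.1) (mem_support_iff.mp hg.1)
  · intro m hm hmne
    obtain ⟨x, hx, y, hy, rfl⟩ := Finset.mem_add.mp (support_mul f g hm)
    rcases hle x hx with rfl | hx'
    · rcases hge y hy with rfl | hy'
      · exact absurd rfl hmne
      · rw [add_comm x y, add_comm x b]; exact lexLt_add_right _ hy'
    · exact lexLt_add' hx' (hge y hy)

lemma isInitialMon_one {K : Type*} [Field K] {n : ℕ} :
    IsInitialMon lexLt (1 : MvPolynomial (Fin n) K) 0 := by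
  constructor
  · rw [mem_support_iff, coeff_one]; simp
  · intro m hm hmne
    rw [mem_support_iff, coeff_one, if_neg (fun h => hmne h.symm)] at hm
    exact absurd rfl hm

lemma isInitialMon_prod {K : Type*} [Field K] {n : ℕ} {ι : Type*} (s : Finset ι)
    (f : ι → MvPolynomial (Fin n) K) (m : ι → (Fin n →₀ ℕ))
    (h : ∀ p ∈ s, IsInitialMon lexLt (f p) (m p)) :
    IsInitialMon lexLt (∏ p ∈ s, f p) (∑ p ∈ s, m p) := by
  classical
  induction s using Finset.cons_induction with
  | empty => simpa using isInitialMon_one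
  | cons a s ha ih =>
    rw [Finset.prod_cons, Finset.sum_cons]
    exact isInitialMon_mul (h a (Finset.mem_cons_self a s))
      (ih fun p hp => h p (Finset.mem_cons_of_mem hp))

lemma isInitialMon_factor {K : Type*} [Field K] {n : ℕ} {i j : Fin n} (hij : i < j) :
    IsInitialMon lexLt (X i - X j : MvPolynomial (Fin n) K) (Finsupp.single j 1) := by
  classical
  have hne : (Finsupp.single i 1 : Fin n →₀ ℕ) ≠ Finsupp.single j 1 := by
    intro h
    exact hij.ne (by simpa using (Finsupp.single_left_inj (one_ne_zero)).mp h)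
  have hlt : lexLt (Finsupp.single i 1 : Fin n →₀ ℕ) (Finsupp.single j 1) := by
    refine ⟨j, ?_, fun k hk => ?_⟩
    · simp [Finsupp.single_apply, hij.ne]
    · simp [Finsupp.single_apply, (hij.trans hk).ne, hk.ne]
  constructor
  · rw [mem_support_iff, coeff_sub, coeff_X', coeff_X', if_neg hne, if_pos rfl]
    simp
  · intro m hm hmne
    rw [mem_support_iff, coeff_sub, coeff_X', coeff_X',
      if_neg (fun h : Finsupp.single j 1 = m => hmne h.symm)] at hm
    have : Finsupp.single i 1 = m := by
      by_contra hmi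
      rw [if_neg hmi] at hm; simp at hm
    rw [← this]; exact hlt

/-- For a column standard tableau `T`, the lex-initial monomial (with
`x 0 < x 1 < ⋯`) of `f_T` is `∏ i, x i ^ (row of i)` (rows 0-indexed, so the
exponent of `x i` is `d_i - 1`). -/
theorem initial_spechtPoly_lex {K : Type*} [Field K] {n : ℕ} {l : List ℕ}
    {T : Fin n → ℕ × ℕ} (hl : IsPartitionList n l) (hT : IsTableau n l T)
    (hcs : ∀ i j : Fin n, (T i).2 = (T j).2 → (T i).1 < (T j).1 → i < j) :
    IsInitialMon lexLt (spechtPoly n K T)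
      (Finsupp.equivFunOnFinite.symm fun i => (T i).1) := by
  set S := Finset.univ.filter
      (fun p : Fin n × Fin n => (T p.1).2 = (T p.2).2 ∧ (T p.1).1 < (T p.2).1) with hS
  have hfac : ∀ p ∈ S, IsInitialMon lexLt ((X p.1 - X p.2 : MvPolynomial (Fin n) K))
      (Finsupp.single p.2 1) := by
    intro p hp
    rw [hS, Finset.mem_filter] at hp
    exact isInitialMon_factor (hcs p.1 p.2 hp.2.1 hp.2.2)
  have hmain := isInitialMon_prod S _ _ hfac
  have hsum : (∑ p ∈ S, Finsupp.single p.2 (1:ℕ))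
      = Finsupp.equivFunOnFinite.symm fun i => (T i).1 := by
    ext i
    have hmem : ∀ p : Fin n × Fin n, p ∈ S.filter (fun p => p.2 = i) ↔
        ((T p.1).2 = (T p.2).2 ∧ (T p.1).1 < (T p.2).1) ∧ p.2 = i := by
      intro p; rw [hS]; simp [Finset.mem_filter, and_assoc]
    have h1 : (∑ p ∈ S, Finsupp.single p.2 (1:ℕ)) i
        = (S.filter (fun p => p.2 = i)).card := by
      rw [Finsupp.finset_sum_apply, Finset.card_filter]
      refine Finset.sum_congr rfl fun p _ => ?_
      simp [Finsupp.single_apply]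
    have h2 : (Finsupp.equivFunOnFinite.symm (fun i => (T i).1)) i = (T i).1 := rfl
    rw [h1, h2]
    have hTi : (T i).1 < l.length ∧ (T i).2 < l.getD (T i).1 0 := (hT.2 (T i)).mp ⟨i, rfl⟩
    rw [← Finset.card_range ((T i).1)]
    refine Finset.card_bij (fun p _ => (T p.1).1) ?_ ?_ ?_
    · intro p hp
      obtain ⟨⟨-, hrow⟩, hpi⟩ := (hmem p).mp hp
      rw [hpi] at hrow
      exact Finset.mem_range.mpr hrow
    · intro p hp q hq heq
      obtain ⟨⟨hpc, -⟩, hpi⟩ := (hmem p).mp hp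
      obtain ⟨⟨hqc, -⟩, hqi⟩ := (hmem q).mp hq
      have hcol : (T p.1).2 = (T q.1).2 := by rw [hpc, hqc, hpi, hqi]
      have : T p.1 = T q.1 := Prod.ext heq hcol
      exact Prod.ext (hT.1 this) (hpi.trans hqi.symm)
    · intro r hr
      rw [Finset.mem_range] at hr
      have hrl : r < l.length := hr.trans hTi.1
      have hmono : l.getD (T i).1 0 ≤ l.getD r 0 := by
        rw [List.getD_eq_getElem _ _ hrl, List.getD_eq_getElem _ _ hTi.1]
        exact List.pairwise_iff_get.mp hl.1 ⟨r, hrl⟩ ⟨(T i).1, hTi.1⟩ hr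
      obtain ⟨j, hj⟩ := (hT.2 (r, (T i).2)).mpr ⟨hrl, lt_of_lt_of_le hTi.2 hmono⟩
      refine ⟨(j, i), (hmem (j, i)).mpr ⟨⟨?_, ?_⟩, rfl⟩, ?_⟩
      · rw [hj]
      · rw [hj]; exact hr
      · show (T j).1 = r
        rw [hj]
  rw [hsum] at hmain
  exact hmain
end

section
/- If f ∈ K[x_1,...,x_n] is a product of linear forms, and < and <' are two monomial orders inducing the same ordering on the variables x_1,...,x_n, then the initial monomial of f with respect to < equals the initial monomial of f with respect to <'. -/
open MvPolynomial

section Aux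

variable {K : Type*} [Field K] {n : ℕ}

lemma MonOrder.initial_unique (o : MonOrder n) {f : MvPolynomial (Fin n) K}
    {m m₁ : Fin n →₀ ℕ} (h : IsInitialMon o.lt f m) (h₁ : IsInitialMon o.lt f m₁) :
    m = m₁ := by
  by_contra hne
  exact o.irrefl m (o.trans' m m₁ m (h₁.2 m h.1 hne) (h.2 m₁ h₁.1 (Ne.symm hne)))

lemma MonOrder.exists_max (o : MonOrder n) (s : Finset (Fin n →₀ ℕ)) (hs : s.Nonempty) :
    ∃ m ∈ s, ∀ x ∈ s, x ≠ m → o.lt x m := by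
  classical
  induction s using Finset.induction with
  | empty => simp at hs
  | @insert a s _ ih =>
    rcases s.eq_empty_or_nonempty with rfl | hne
    · exact ⟨a, by simp, by simp⟩
    · obtain ⟨m, hm, hmax⟩ := ih hne
      rcases o.trichot a m with h | h | h
      · refine ⟨m, Finset.mem_insert_of_mem hm, ?_⟩
        intro x hx hxm
        rcases Finset.mem_insert.1 hx with rfl | hx
        · exact h
        · exact hmax x hx hxm
      · subst h
        refine ⟨a, Finset.mem_insert_self a s, ?_⟩
        intro x hx hxa
        rcases Finset.mem_insert.1 hx with rfl | hx
        · exact absurd rfl hxa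
        · exact hmax x hx hxa
      · refine ⟨a, Finset.mem_insert_self a s, ?_⟩
        intro x hx hxa
        rcases Finset.mem_insert.1 hx with rfl | hx
        · exact absurd rfl hxa
        · rcases eq_or_ne x m with rfl | hxm
          · exact h
          · exact o.trans' x m a (hmax x hx hxm) h

lemma MonOrder.exists_initial (o : MonOrder n) {f : MvPolynomial (Fin n) K} (hf : f ≠ 0) :
    ∃ m, IsInitialMon o.lt f m := by
  obtain ⟨m, hm, hmax⟩ := o.exists_max f.support (by simpa using hf)
  exact ⟨m, hm, hmax⟩

lemma MonOrder.add_lt_add_left (o : MonOrder n) {b c : Fin n →₀ ℕ} (a : Fin n →₀ ℕ)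
    (h : o.lt b c) : o.lt (a + b) (a + c) := by
  rw [add_comm a b, add_comm a c]; exact o.add_right b c a h

lemma MonOrder.initial_mul (o : MonOrder n) {g h : MvPolynomial (Fin n) K}
    {a b : Fin n →₀ ℕ} (ha : IsInitialMon o.lt g a) (hb : IsInitialMon o.lt h b) :
    IsInitialMon o.lt (g * h) (a + b) := by
  have key : ∀ c ∈ g.support, ∀ d ∈ h.support, c + d = a + b → c = a ∧ d = b := by
    intro c hc d hd hcd
    rcases eq_or_ne c a with rfl | hca
    · exact ⟨rfl, by exact add_left_cancel hcd⟩
    · exfalso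
      have h1 : o.lt (c + d) (a + d) := o.add_right c a d (ha.2 c hc hca)
      rcases eq_or_ne d b with rfl | hdb
      · rw [hcd] at h1; exact o.irrefl _ h1
      · have h2 : o.lt (a + d) (a + b) := o.add_lt_add_left a (hb.2 d hd hdb)
        have := o.trans' _ _ _ h1 h2
        rw [hcd] at this; exact o.irrefl _ this
  constructor
  · rw [MvPolynomial.mem_support_iff, MvPolynomial.coeff_mul]
    rw [Finset.sum_eq_single_of_mem (a, b) (Finset.HasAntidiagonal.mem_antidiagonal.2 rfl)]
    · exact mul_ne_zero (MvPolynomial.mem_support_iff.1 ha.1)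
        (MvPolynomial.mem_support_iff.1 hb.1)
    · intro p hp hpab
      by_contra hzero
      have hc : p.1 ∈ g.support := by
        rw [MvPolynomial.mem_support_iff]; intro h0; apply hzero; rw [h0, zero_mul]
      have hd : p.2 ∈ h.support := by
        rw [MvPolynomial.mem_support_iff]; intro h0; apply hzero; rw [h0, mul_zero]
      obtain ⟨h1, h2⟩ := key p.1 hc p.2 hd (Finset.HasAntidiagonal.mem_antidiagonal.1 hp)
      exact hpab (Prod.ext h1 h2)
  · intro m₁ hm₁ hne
    have := MvPolynomial.support_mul g h hm₁
    rw [Finset.mem_add] at this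
    obtain ⟨c, hc, d, hd, rfl⟩ := this
    rcases eq_or_ne c a with rfl | hca
    · rcases eq_or_ne d b with rfl | hdb
      · exact absurd rfl hne
      · exact o.add_lt_add_left c (hb.2 d hd hdb)
    · have h1 : o.lt (c + d) (a + d) := o.add_right c a d (ha.2 c hc hca)
      rcases eq_or_ne d b with rfl | hdb
      · exact h1
      · exact o.trans' _ _ _ h1 (o.add_lt_add_left a (hb.2 d hd hdb))

lemma degree_one_single {d : Fin n →₀ ℕ} (hd : ∑ i ∈ d.support, d i = 1) :
    ∃ i, d = Finsupp.single i 1 := by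
  have hne : d.support.Nonempty := by
    by_contra h
    rw [Finset.not_nonempty_iff_eq_empty] at h
    rw [h] at hd; simp at hd
  obtain ⟨i, hi⟩ := hne
  have hcard : d.support.card ≤ 1 := by
    by_contra hcard
    push_neg at hcard
    have h2 : 2 ≤ ∑ i ∈ d.support, d i := by
      calc 2 ≤ d.support.card := hcard
        _ = ∑ _i ∈ d.support, 1 := by simp
        _ ≤ ∑ i ∈ d.support, d i :=
          Finset.sum_le_sum fun j hj => Nat.one_le_iff_ne_zero.2 (Finsupp.mem_support_iff.1 hj)
    omega
  have hsupp : d.support = {i} := by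
    apply Finset.eq_singleton_iff_unique_mem.2
    refine ⟨hi, fun j hj => ?_⟩
    by_contra hji
    have : 2 ≤ d.support.card := Finset.one_lt_card.2 ⟨j, hj, i, hi, hji⟩
    omega
  have hdi : d i = 1 := by rw [hsupp] at hd; simpa using hd
  obtain ⟨_, h2⟩ := Finsupp.support_eq_singleton.1 hsupp
  exact ⟨i, by rw [h2, hdi]⟩

end Aux

/-- A product of linear forms has the same initial monomial with respect to any
two monomial orders inducing the same ordering of the variables. -/
theorem initial_eq_of_same_variable_order {K : Type*} [Field K] {n : ℕ}
    (o o' : MonOrder n)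
    (hsame : ∀ i j : Fin n,
      o.lt (Finsupp.single i 1) (Finsupp.single j 1) ↔
        o'.lt (Finsupp.single i 1) (Finsupp.single j 1))
    (L : List (MvPolynomial (Fin n) K)) (hL : ∀ g ∈ L, g.IsHomogeneous 1)
    (f : MvPolynomial (Fin n) K) (hf : f = L.prod)
    (m m' : Fin n →₀ ℕ) (hm : IsInitialMon o.lt f m) (hm' : IsInitialMon o'.lt f m') :
    m = m' := by
  have single_of_supp : ∀ g : MvPolynomial (Fin n) K, g.IsHomogeneous 1 →
      ∀ d ∈ g.support, ∃ i, d = Finsupp.single i 1 := by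
    intro g hg d hd
    apply degree_one_single
    have := hg (MvPolynomial.mem_support_iff.1 hd)
    rw [← this, Finsupp.weight_apply, Finsupp.sum]
    simp
  subst hf
  revert hL
  induction L generalizing m m' with
  | nil =>
    intro hL
    simp only [List.prod_nil] at hm hm'
    have h1 := hm.1
    have h2 := hm'.1
    rw [MvPolynomial.mem_support_iff, MvPolynomial.coeff_one] at h1 h2
    have e1 : m = 0 := by by_contra h; exact h1 (if_neg (fun hh => h hh.symm))
    have e2 : m' = 0 := by by_contra h; exact h2 (if_neg (fun hh => h hh.symm))
    rw [e1, e2]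
  | cons g L ih =>
    intro hL
    rw [List.prod_cons] at hm hm'
    have hne : g * L.prod ≠ 0 := by
      intro h
      rw [h] at hm
      simpa using hm.1
    have hg0 : g ≠ 0 := left_ne_zero_of_mul hne
    have hP0 : L.prod ≠ 0 := right_ne_zero_of_mul hne
    obtain ⟨a, ha⟩ := o.exists_initial hg0
    obtain ⟨b, hb⟩ := o.exists_initial hP0
    obtain ⟨a', ha'⟩ := o'.exists_initial hg0
    obtain ⟨b', hb'⟩ := o'.exists_initial hP0
    have hmab : m = a + b := o.initial_unique hm (o.initial_mul ha hb)
    have hmab' : m' = a' + b' := o'.initial_unique hm' (o'.initial_mul ha' hb')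
    have hbb : b = b' := ih b b' hb hb' (fun g' hg' => hL g' (List.mem_cons_of_mem _ hg'))
    have hgh : g.IsHomogeneous 1 := hL g List.mem_cons_self
    obtain ⟨i, hai⟩ := single_of_supp g hgh a ha.1
    obtain ⟨j, haj⟩ := single_of_supp g hgh a' ha'.1
    have haa : a = a' := by
      rcases eq_or_ne a a' with h | h
      · exact h
      · exfalso
        have h1 : o.lt a' a := ha.2 a' ha'.1 h.symm
        have h2 : o'.lt a a' := ha'.2 a ha.1 h
        rw [hai, haj] at h1
        have h3 : o'.lt a' a := by rw [hai, haj]; exact (hsame j i).1 h1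
        exact o'.irrefl _ (o'.trans' _ _ _ h2 h3)
    rw [hmab, hmab', haa, hbb]
end
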